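/- The equivalence classes of 2-process affine models are exactly the five classes: for any two 2-process affine tasks A on n = 3^ℓ and B on m = 3^{ℓ'} (ℓ, ℓ' ≥ 1), the models A* and B* solve each other's tasks (B* solves A and A* solves B) if and only if class(A) = class(B). -/

import Mathlib

/-!
2-process affine tasks, modeled combinatorially.
The ℓ-th iterated standard chromatic subdivision of the 1-simplex is the path
graph on vertices `{0, …, n}`, `n = 3^ℓ`, whose edges are the pairs `{i, i+1}`
for `0 ≤ i < n`; vertex `i` has color `i % 2`, vertex `0` is the solo vertex of
process `p₀` and vertex `n` the solo vertex of `p₁`.  An edge `{i, i+1}` is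
encoded by its left endpoint `i`, and a 2-process affine task on `n` is a
nonempty finite set `A : Finset ℕ` of such edges (left endpoints `< n`).
-/

/-- `StepRel A x y`: the vertices `x` and `y` are joined by an edge of `A`
(the edge `{i, i+1}` being encoded by its left endpoint `i`). -/
def StepRel (A : Finset ℕ) (x y : ℕ) : Prop :=
  (y = x + 1 ∧ x ∈ A) ∨ (x = y + 1 ∧ y ∈ A)

/-- `P₁(A)`: the vertices `0` and `n` are joined by a path all of whose edges
lie in `A`. -/
def P1 (n : ℕ) (A : Finset ℕ) : Prop := Relation.ReflTransGen (StepRel A) 0 n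

/-- `P₂(A)`: the edge `{0, 1}` belongs to `A`. -/
def P2 (A : Finset ℕ) : Prop := 0 ∈ A

/-- `P₃(A)`: the edge `{n-1, n}` belongs to `A`. -/
def P3 (n : ℕ) (A : Finset ℕ) : Prop := n - 1 ∈ A

open Classical in
/-- The class of a 2-process affine task `A` on `{0,…,n}`:
`1` if `P₁(A)`; `2` if `¬P₁ ∧ P₂ ∧ P₃`; `3` if `¬P₁ ∧ P₂ ∧ ¬P₃`;
`4` if `¬P₁ ∧ ¬P₂ ∧ P₃`; `5` if `¬P₁ ∧ ¬P₂ ∧ ¬P₃`. -/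
noncomputable def classOf (n : ℕ) (A : Finset ℕ) : ℕ :=
  if P1 n A then 1
  else if P2 A then (if P3 n A then 2 else 3)
  else (if P3 n A then 4 else 5)

/-- The class order `⊑` on `{1, …, 5}`: `c ⊑ c'` iff `c = c'`, or `c = 1`,
or `c' = 5`, or (`c = 2` and `c' ∈ {3, 4}`). -/
def ClassLE (c c' : ℕ) : Prop :=
  c = c' ∨ c = 1 ∨ c' = 5 ∨ (c = 2 ∧ (c' = 3 ∨ c' = 4))

/-- The composition `A ⋆ B` of a task `A` on `{0,…,n}` with a task `B` on
`{0,…,m}`: each edge of `A` is replaced by an appropriately oriented copy of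
`B`; its edges are `{i·m + r, i·m + r + 1}` for `{i, i+1} ∈ A` and
`{j, j+1} ∈ B`, where `r = j` if `i` is even and `r = m - 1 - j` if `i` is odd
(edges encoded by left endpoints). -/
def comp (m : ℕ) (A B : Finset ℕ) : Finset ℕ :=
  (A ×ˢ B).image fun p => p.1 * m + (if Even p.1 then p.2 else m - 1 - p.2)

/-- `iterTask n A k` is the iterate `A^{⋆k}` (for `k ≥ 1`) of a task `A` on
`{0,…,n}`, a task on `{0,…,n^k}`: `A^{⋆1} = A`, `A^{⋆(k+1)} = A^{⋆k} ⋆ A`.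
(The value at `k = 0` is irrelevant and set to `A`.) -/
def iterTask (n : ℕ) (A : Finset ℕ) : ℕ → Finset ℕ
  | 0 => A
  | 1 => A
  | k + 2 => comp n (iterTask n A (k + 1)) A

/-- A chromatic carrier-preserving simplicial map `δ` from a task `A` on
`{0,…,n}` to the subdivided 1-simplex on `{0,…,m}`: `δ` maps `{0,…,n}` to
`{0,…,m}`; `δ i ≡ i (mod 2)` for every vertex incident to an edge of `A`;
`|δ (i+1) - δ i| = 1` for every edge `{i, i+1} ∈ A`; `δ 0 = 0` whenever
`{0,1} ∈ A`; and `δ n = m` whenever `{n-1, n} ∈ A`. -/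
def IsCCMap (n m : ℕ) (A : Finset ℕ) (δ : ℕ → ℕ) : Prop :=
  (∀ i ≤ n, δ i ≤ m) ∧
  (∀ i ∈ A, δ i % 2 = i % 2 ∧ δ (i + 1) % 2 = (i + 1) % 2) ∧
  (∀ i ∈ A, δ (i + 1) = δ i + 1 ∨ δ i = δ (i + 1) + 1) ∧
  (0 ∈ A → δ 0 = 0) ∧
  (n - 1 ∈ A → δ n = m)

/-- The image task `δ(A) = { {δ i, δ (i+1)} : {i, i+1} ∈ A }`
(edges encoded by left endpoints, i.e. by `min (δ i) (δ (i+1))`). -/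
def imageTask (A : Finset ℕ) (δ : ℕ → ℕ) : Finset ℕ :=
  A.image fun i => min (δ i) (δ (i + 1))

/-- `Solves m n B A`: the affine model `B*` of a task `B` on `{0,…,m}` solves
the task `A` on `{0,…,n}`, i.e. there exist `k ≥ 1` and a chromatic
carrier-preserving simplicial map `δ` from `B^{⋆k}` (a task on `{0,…,m^k}`)
to the subdivided 1-simplex on `{0,…,n}` with `δ(B^{⋆k}) ⊆ A`. -/
def Solves (m n : ℕ) (B A : Finset ℕ) : Prop :=
  ∃ k, 1 ≤ k ∧ ∃ δ : ℕ → ℕ,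
    IsCCMap (m ^ k) n (iterTask m B k) δ ∧ imageTask (iterTask m B k) δ ⊆ A

/-! ### Auxiliary lemmas -/

lemma iter_one (m : ℕ) (B : Finset ℕ) : iterTask m B 1 = B := rfl

lemma p1_iff_full (n : ℕ) (A : Finset ℕ) : P1 n A ↔ ∀ i < n, i ∈ A := by
  constructor
  · intro h
    have H : ∀ y : ℕ, Relation.ReflTransGen (StepRel A) 0 y → ∀ i < y, i ∈ A := by
      intro y hy
      induction hy with
      | refl => exact fun i hi => absurd hi (by omega)
      | @tail b c _ hstep ih =>
        rcases hstep with ⟨hc, hb⟩ | ⟨hb, hc⟩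
        · intro i hi
          rcases Nat.lt_or_ge i b with h' | h'
          · exact ih i h'
          · have hib : i = b := by omega
            exact hib ▸ hb
        · intro i hi
          exact ih i (by omega)
    exact H n h
  · intro h
    have H : ∀ t, t ≤ n → Relation.ReflTransGen (StepRel A) 0 t := by
      intro t
      induction t with
      | zero => exact fun _ => .refl
      | succ t ih =>
        intro ht
        exact .tail (ih (by omega)) (Or.inl ⟨rfl, h t (by omega)⟩)
    exact H n le_rfl

lemma zero_mem_iter {m : ℕ} {B : Finset ℕ} (h : 0 ∈ B) : ∀ k, 0 ∈ iterTask m B k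
  | 0 => h
  | 1 => h
  | (k + 2) => by
    have ih := zero_mem_iter (m := m) h (k + 1)
    show 0 ∈ comp m (iterTask m B (k + 1)) B
    exact Finset.mem_image.2 ⟨(0, 0), Finset.mem_product.2 ⟨ih, h⟩, by simp⟩

lemma top_mem_iter {m : ℕ} (hmodd : m % 2 = 1) {B : Finset ℕ} (h : m - 1 ∈ B) :
    ∀ k, m ^ (k + 1) - 1 ∈ iterTask m B (k + 1)
  | 0 => by simpa [pow_one, iter_one] using h
  | (k + 1) => by
    have ih := top_mem_iter hmodd h k
    show m ^ (k + 2) - 1 ∈ comp m (iterTask m B (k + 1)) B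
    have hM1 : 1 ≤ m ^ (k + 1) := Nat.one_le_pow _ _ (by omega)
    have hModd : m ^ (k + 1) % 2 = 1 := by
      have : Odd (m ^ (k + 1)) := Odd.pow (Nat.odd_iff.mpr hmodd)
      exact Nat.odd_iff.mp this
    refine Finset.mem_image.2 ⟨(m ^ (k + 1) - 1, m - 1), Finset.mem_product.2 ⟨ih, h⟩, ?_⟩
    have he : Even (m ^ (k + 1) - 1) := by
      rw [Nat.even_iff]; omega
    dsimp only
    rw [if_pos he]
    have hsub : (m ^ (k + 1) - 1) * m = m ^ (k + 1) * m - m := Nat.sub_one_mul _ _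
    have hle : m ≤ m ^ (k + 1) * m := Nat.le_mul_of_pos_left m (by omega)
    rw [show m ^ (k + 2) = m ^ (k + 1) * m from pow_succ m (k + 1)]
    omega

lemma full_iter {m : ℕ} (hm1 : 1 ≤ m) {B : Finset ℕ} (h : ∀ i < m, i ∈ B) :
    ∀ k, ∀ t < m ^ (k + 1), t ∈ iterTask m B (k + 1)
  | 0 => fun t ht => h t (by simpa [pow_one] using ht)
  | (k + 1) => by
    intro t ht
    rw [pow_succ] at ht
    have hi : t / m < m ^ (k + 1) := (Nat.div_lt_iff_lt_mul (by omega)).2 ht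
    have hs : t % m < m := Nat.mod_lt _ (by omega)
    have hdm : m * (t / m) + t % m = t := Nat.div_add_mod t m
    have ihm := full_iter hm1 h k _ hi
    show t ∈ comp m (iterTask m B (k + 1)) B
    by_cases he : Even (t / m)
    · refine Finset.mem_image.2 ⟨(t / m, t % m), Finset.mem_product.2 ⟨ihm, h _ hs⟩, ?_⟩
      simp only [if_pos he]
      rw [Nat.mul_comm]
      exact hdm
    · refine Finset.mem_image.2 ⟨(t / m, m - 1 - t % m),
        Finset.mem_product.2 ⟨ihm, h _ (by omega)⟩, ?_⟩
      simp only [if_neg he]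
      have h2 : m - 1 - (m - 1 - t % m) = t % m := by omega
      rw [h2, Nat.mul_comm]
      exact hdm

lemma chain_rtg {A : Finset ℕ} (δ : ℕ → ℕ) :
    ∀ M, (∀ i < M, StepRel A (δ i) (δ (i + 1))) →
      Relation.ReflTransGen (StepRel A) (δ 0) (δ M)
  | 0, _ => .refl
  | (M + 1), h => .tail (chain_rtg δ M fun i hi => h i (by omega)) (h M (by omega))

lemma solves_imp {m n : ℕ} (hm1 : 1 ≤ m) (hmodd : m % 2 = 1) {A B : Finset ℕ}
    (hs : Solves m n B A) :
    (P1 m B → P1 n A) ∧ (P2 B → P2 A) ∧ (P3 m B → P3 n A) := by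
  obtain ⟨k, hk, δ, ⟨hbound, hpar, hedge, h0, htop⟩, himg⟩ := hs
  obtain ⟨k', rfl⟩ : ∃ k', k = k' + 1 := ⟨k - 1, by omega⟩
  set C := iterTask m B (k' + 1) with hC
  set M := m ^ (k' + 1) with hM
  have hM1 : 1 ≤ M := Nat.one_le_pow _ _ (by omega)
  have hstep : ∀ i ∈ C, StepRel A (δ i) (δ (i + 1)) := by
    intro i hi
    have hmem : min (δ i) (δ (i + 1)) ∈ A := himg (Finset.mem_image_of_mem _ hi)
    rcases hedge i hi with h | h
    · exact Or.inl ⟨h, by rwa [min_eq_left (by omega)] at hmem⟩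
    · exact Or.inr ⟨h, by rwa [min_eq_right (by omega)] at hmem⟩
  refine ⟨?_, ?_, ?_⟩
  · intro h1
    have hfullB := (p1_iff_full m B).1 h1
    have hfullC : ∀ t < M, t ∈ C := full_iter hm1 hfullB k'
    have hw : Relation.ReflTransGen (StepRel A) (δ 0) (δ M) :=
      chain_rtg δ M (fun i hi => hstep i (hfullC i hi))
    have e0 : δ 0 = 0 := h0 (hfullC 0 (by omega))
    have eM : δ M = n := htop (hfullC (M - 1) (by omega))
    rwa [e0, eM] at hw
  · intro h2
    have h0C : 0 ∈ C := zero_mem_iter h2 _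
    have e0 : δ 0 = 0 := h0 h0C
    rcases hstep 0 h0C with ⟨h, hb⟩ | ⟨h, hb⟩
    · rwa [e0] at hb
    · exfalso; omega
  · intro h3
    have hC3 : M - 1 ∈ C := top_mem_iter hmodd h3 k'
    have eM : δ M = n := htop hC3
    have hble : δ (M - 1) ≤ n := hbound _ (by omega)
    have hM' : M - 1 + 1 = M := by omega
    have hmem : min (δ (M - 1)) (δ (M - 1 + 1)) ∈ A := himg (Finset.mem_image_of_mem _ hC3)
    rw [hM'] at hmem
    rcases hedge _ hC3 with h | h <;> rw [hM'] at h
    · rw [min_eq_left (by omega)] at hmem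
      have hd : δ (M - 1) = n - 1 := by omega
      show n - 1 ∈ A
      rwa [hd] at hmem
    · exfalso; omega

/-! ### Constructions -/

lemma succ_mod_spec (k i : ℕ) (hk : 0 < k) :
    (i + 1) % k = i % k + 1 ∨ (i % k = k - 1 ∧ (i + 1) % k = 0) := by
  have h2 : i % k < k := Nat.mod_lt _ hk
  rcases Nat.lt_or_ge (i % k + 1) k with h | h
  · left
    conv_lhs => rw [← Nat.div_add_mod i k]
    rw [Nat.add_assoc, Nat.mul_add_mod]
    exact Nat.mod_eq_of_lt h
  · right
    have h3 : i % k + 1 = k := by omega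
    refine ⟨by omega, ?_⟩
    conv_lhs => rw [← Nat.div_add_mod i k]
    rw [Nat.add_assoc, Nat.mul_add_mod, h3, Nat.mod_self]

/-- The triangle-wave folding map onto `[0, n]`. -/
def tri (n i : ℕ) : ℕ :=
  if i % (2 * n) ≤ n then i % (2 * n) else 2 * n - i % (2 * n)

lemma tri_prop {n : ℕ} (hn : 1 ≤ n) (i : ℕ) :
    tri n i ≤ n ∧ tri n i % 2 = i % 2 ∧
      (tri n (i + 1) = tri n i + 1 ∨ tri n i = tri n (i + 1) + 1) := by
  have h2n : 0 < 2 * n := by omega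
  have hr : i % (2 * n) < 2 * n := Nat.mod_lt _ h2n
  have hs : (i + 1) % (2 * n) < 2 * n := Nat.mod_lt _ h2n
  have hsucc := succ_mod_spec (2 * n) i h2n
  obtain ⟨x, hx⟩ : ∃ x, i = 2 * x + i % (2 * n) :=
    ⟨n * (i / (2 * n)), by rw [← Nat.mul_assoc]; exact (Nat.div_add_mod i (2 * n)).symm⟩
  unfold tri
  revert hr hs hsucc hx
  generalize i % (2 * n) = r
  generalize (i + 1) % (2 * n) = s
  intro hr hs hsucc hx
  rcases hsucc with h | ⟨ha, hb⟩ <;>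
    refine ⟨by split <;> omega, by split <;> omega, ?_⟩ <;>
    (split <;> split <;> omega)

lemma tri_zero (n : ℕ) : tri n 0 = 0 := by simp [tri]

lemma tri_apex {n q : ℕ} (hn : 1 ≤ n) (hq : q % 2 = 1) : tri n (n * q) = n := by
  obtain ⟨t, rfl⟩ : ∃ t, q = 2 * t + 1 := ⟨q / 2, by omega⟩
  have h1 : n * (2 * t + 1) = 2 * n * t + n := by ring
  unfold tri
  rw [h1, Nat.mul_add_mod, Nat.mod_eq_of_lt (by omega), if_pos le_rfl]

lemma solves_c1 {ℓ ℓ' m n : ℕ} (hℓ : 1 ≤ ℓ) (hℓ' : 1 ≤ ℓ') (hn : n = 3 ^ ℓ)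
    (hm : m = 3 ^ ℓ') {A B : Finset ℕ} (hA1 : P1 n A) : Solves m n B A := by
  have hfull : ∀ i < n, i ∈ A := (p1_iff_full n A).1 hA1
  have hn1 : 1 ≤ n := by subst hn; exact Nat.one_le_pow _ _ (by norm_num)
  have htop : tri n (m ^ ℓ) = n := by
    have hle : ℓ ≤ ℓ' * ℓ := Nat.le_mul_of_pos_left ℓ (by omega)
    have h1 : m ^ ℓ = n * 3 ^ (ℓ' * ℓ - ℓ) := by
      subst hn hm
      rw [← pow_mul, ← pow_add]
      congr 1
      omega
    rw [h1]
    exact tri_apex hn1 (Nat.odd_iff.mp (Odd.pow (by decide : Odd 3)))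
  refine ⟨ℓ, hℓ, tri n, ⟨?_, ?_, ?_, fun _ => tri_zero n, fun _ => htop⟩, ?_⟩
  · intro i _; exact (tri_prop hn1 i).1
  · intro i _; exact ⟨(tri_prop hn1 i).2.1, (tri_prop hn1 (i + 1)).2.1⟩
  · intro i _; exact (tri_prop hn1 i).2.2
  · intro x hx
    simp only [imageTask, Finset.mem_image] at hx
    obtain ⟨i, _, rfl⟩ := hx
    have h1 := (tri_prop hn1 i).1
    have h2 := (tri_prop hn1 (i + 1)).1
    have h3 := (tri_prop hn1 i).2.2
    exact hfull _ (by omega)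

lemma solves_c2 {m n g : ℕ} {A B : Finset ℕ} (hnodd : n % 2 = 1) (hmodd : m % 2 = 1)
    (hg : g < m) (hgB : g ∉ B) (hA2 : P2 A) (hA3 : P3 n A) : Solves m n B A := by
  refine ⟨1, le_rfl, fun i => if i ≤ g then i % 2 else n - 1 + i % 2, ?_, ?_⟩
  · rw [pow_one, iter_one]
    refine ⟨fun i _ => ?_, fun i hi => ?_, fun i hi => ?_, fun _ => ?_, fun _ => ?_⟩
    · dsimp only; split <;> omega
    · have hig : i ≠ g := fun h => hgB (h ▸ hi)
      dsimp only
      constructor <;> (split <;> omega)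
    · have hig : i ≠ g := fun h => hgB (h ▸ hi)
      dsimp only
      split <;> split <;> omega
    · dsimp only; rw [if_pos (Nat.zero_le g)]
    · dsimp only; rw [if_neg (by omega)]; omega
  · intro x hx
    rw [iter_one] at hx
    simp only [imageTask, Finset.mem_image] at hx
    obtain ⟨i, hi, rfl⟩ := hx
    have hig : i ≠ g := fun h => hgB (h ▸ hi)
    rcases Nat.lt_or_ge i g with hlt | hge
    · have hmin : min (if i ≤ g then i % 2 else n - 1 + i % 2)
          (if i + 1 ≤ g then (i + 1) % 2 else n - 1 + (i + 1) % 2) = 0 := by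
        rw [if_pos (by omega), if_pos (by omega)]; omega
      rw [hmin]; exact hA2
    · have hmin : min (if i ≤ g then i % 2 else n - 1 + i % 2)
          (if i + 1 ≤ g then (i + 1) % 2 else n - 1 + (i + 1) % 2) = n - 1 := by
        rw [if_neg (by omega), if_neg (by omega)]; omega
      rw [hmin]; exact hA3

lemma solves_c3 {m n : ℕ} (hn1 : 1 ≤ n) {A B : Finset ℕ} (hA2 : P2 A) (hB3 : ¬ P3 m B) :
    Solves m n B A := by
  refine ⟨1, le_rfl, fun i => i % 2, ?_, ?_⟩
  · rw [pow_one, iter_one]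
    exact ⟨fun i _ => by dsimp only; omega, fun i _ => by dsimp only; omega,
      fun i _ => by dsimp only; omega, fun _ => rfl, fun h => absurd h hB3⟩
  · intro x hx
    rw [iter_one] at hx
    simp only [imageTask, Finset.mem_image] at hx
    obtain ⟨i, _, rfl⟩ := hx
    have hmin : min (i % 2) ((i + 1) % 2) = 0 := by omega
    rw [hmin]; exact hA2

lemma solves_c4 {m n : ℕ} (hnodd : n % 2 = 1) (hmodd : m % 2 = 1) {A B : Finset ℕ}
    (hA3 : P3 n A) (hB2 : ¬ P2 B) : Solves m n B A := by
  refine ⟨1, le_rfl, fun i => n - 1 + i % 2, ?_, ?_⟩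
  · rw [pow_one, iter_one]
    exact ⟨fun i _ => by dsimp only; omega, fun i _ => by dsimp only; omega,
      fun i _ => by dsimp only; omega, fun h => absurd h hB2, fun _ => by dsimp only; omega⟩
  · intro x hx
    rw [iter_one] at hx
    simp only [imageTask, Finset.mem_image] at hx
    obtain ⟨i, _, rfl⟩ := hx
    have hmin : min (n - 1 + i % 2) (n - 1 + (i + 1) % 2) = n - 1 := by omega
    rw [hmin]; exact hA3

lemma solves_c5 {m n e : ℕ} {A B : Finset ℕ} (he : e ∈ A) (hen : e < n)
    (hB2 : ¬ P2 B) (hB3 : ¬ P3 m B) : Solves m n B A := by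
  refine ⟨1, le_rfl, fun i => e + (e + i) % 2, ?_, ?_⟩
  · rw [pow_one, iter_one]
    exact ⟨fun i _ => by dsimp only; omega, fun i _ => by dsimp only; omega,
      fun i _ => by dsimp only; omega, fun h => absurd h hB2, fun h => absurd h hB3⟩
  · intro x hx
    rw [iter_one] at hx
    simp only [imageTask, Finset.mem_image] at hx
    obtain ⟨i, _, rfl⟩ := hx
    have hmin : min (e + (e + i) % 2) (e + (e + (i + 1)) % 2) = e := by omega
    rw [hmin]; exact he

lemma classOf_eq_iff {n m : ℕ} {A B : Finset ℕ} :
    classOf n A = classOf m B ↔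
      ((P1 n A ↔ P1 m B) ∧ (¬ P1 n A → ((P2 A ↔ P2 B) ∧ (P3 n A ↔ P3 m B)))) := by
  by_cases h1 : P1 n A <;> by_cases h1' : P1 m B <;>
    by_cases h2 : P2 A <;> by_cases h2' : P2 B <;>
      by_cases h3 : P3 n A <;> by_cases h3' : P3 m B <;>
        simp [classOf, h1, h1', h2, h2', h3, h3']


/-- The equivalence classes of 2-process affine models are exactly the five
classes: the models `A*` and `B*` solve each other's tasks if and only if
`class(A) = class(B)`. -/
theorem equivalent_iff_same_class
    (ℓ ℓ' n m : ℕ) (hℓ : 1 ≤ ℓ) (hℓ' : 1 ≤ ℓ') (hn : n = 3 ^ ℓ) (hm : m = 3 ^ ℓ')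
    (A B : Finset ℕ) (hAne : A.Nonempty) (hAlt : ∀ i ∈ A, i < n)
    (hBne : B.Nonempty) (hBlt : ∀ i ∈ B, i < m) :
    (Solves m n B A ∧ Solves n m A B) ↔ classOf n A = classOf m B := by
  have hn2 : n % 2 = 1 := by
    subst hn; exact Nat.odd_iff.mp (Odd.pow (by decide : Odd 3))
  have hm2 : m % 2 = 1 := by
    subst hm; exact Nat.odd_iff.mp (Odd.pow (by decide : Odd 3))
  have hn1 : 1 ≤ n := by omega
  have hm1 : 1 ≤ m := by omega
  rw [classOf_eq_iff]
  constructor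
  · rintro ⟨hBA, hAB⟩
    obtain ⟨i1, i2, i3⟩ := solves_imp hm1 hm2 hBA
    obtain ⟨j1, j2, j3⟩ := solves_imp hn1 hn2 hAB
    exact ⟨⟨j1, i1⟩, fun _ => ⟨⟨j2, i2⟩, ⟨j3, i3⟩⟩⟩
  · rintro ⟨h1, h23⟩
    by_cases hA1 : P1 n A
    · exact ⟨solves_c1 hℓ hℓ' hn hm hA1, solves_c1 hℓ' hℓ hm hn (h1.1 hA1)⟩
    · have hB1 : ¬ P1 m B := fun hb => hA1 (h1.2 hb)
      obtain ⟨h2, h3⟩ := h23 hA1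
      by_cases hA2 : P2 A <;> by_cases hA3 : P3 n A
      · obtain ⟨g, hg, hgB⟩ : ∃ g, g < m ∧ g ∉ B := by
          by_contra hc
          push_neg at hc
          exact hB1 ((p1_iff_full m B).2 hc)
        obtain ⟨g', hg', hgA⟩ : ∃ g', g' < n ∧ g' ∉ A := by
          by_contra hc
          push_neg at hc
          exact hA1 ((p1_iff_full n A).2 hc)
        exact ⟨solves_c2 hn2 hm2 hg hgB hA2 hA3,
               solves_c2 hm2 hn2 hg' hgA (h2.1 hA2) (h3.1 hA3)⟩
      · exact ⟨solves_c3 hn1 hA2 (fun hb => hA3 (h3.2 hb)),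
               solves_c3 hm1 (h2.1 hA2) hA3⟩
      · exact ⟨solves_c4 hn2 hm2 hA3 (fun hb => hA2 (h2.2 hb)),
               solves_c4 hm2 hn2 (h3.1 hA3) hA2⟩
      · obtain ⟨e, he⟩ := hAne
        obtain ⟨f, hf⟩ := hBne
        exact ⟨solves_c5 he (hAlt e he) (fun hb => hA2 (h2.2 hb)) (fun hb => hA3 (h3.2 hb)),
               solves_c5 hf (hBlt f hf) hA2 hA3⟩
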